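/- Suppose (i) for every action a, element x, and aspect set β, if x ∉ β and a has aspect β, then for all situations s, f_x(s) = f_x(a(s)); and (ii) for every fluent p and aspect set α, if p has aspect α then there exists a family of predicates q_x on situations such that for all s, p(s) ↔ ∀x ∈ α, q_x(f_x(s)). Then for every fluent p, action a, and aspect sets α, β with α ∩ β = ∅, if p has aspect α and a has aspect β, the frame axiom F[a,p] holds, i.e., for all s, p(s) ↔ p(a(s)). -/
import Mathlib

/-- Collective functional formalism: the frame axiom holds for fluents and
actions with disjoint aspect sets. -/
theorem collective_functional_noninterference
    {S 𝒜 : Type*} (f : 𝒜 → S → S)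
    (fluentAspect : (S → Prop) → Set 𝒜 → Prop)
    (actionAspect : (S → S) → Set 𝒜 → Prop)
    (h1 : ∀ (a : S → S) (x : 𝒜) (β : Set 𝒜), x ∉ β → actionAspect a β →
      ∀ s : S, f x s = f x (a s))
    (h2 : ∀ (p : S → Prop) (α : Set 𝒜), fluentAspect p α →
      ∃ q : 𝒜 → S → Prop, ∀ s : S, p s ↔ ∀ x ∈ α, q x (f x s)) :
    ∀ (p : S → Prop) (a : S → S) (α β : Set 𝒜), α ∩ β = ∅ →
      fluentAspect p α → actionAspect a β →
      ∀ s : S, p s ↔ p (a s) := by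
  intro p a α β hdisj hp ha s
  obtain ⟨q, hq⟩ := h2 p α hp
  have key : ∀ x ∈ α, f x s = f x (a s) := by
    intro x hx
    have hxβ : x ∉ β := fun hb => Set.eq_empty_iff_forall_notMem.mp hdisj x ⟨hx, hb⟩
    exact h1 a x β hxβ ha s
  rw [hq s, hq (a s)]
  exact ⟨fun h x hx => key x hx ▸ h x hx, fun h x hx => (key x hx).symm ▸ h x hx⟩
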